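/- arXiv:1312.7765 — 12 statements merged into one kernel-verified Lean document; each statement's English description precedes it below -/
import Mathlib

section
/- In a multi-pointed category (C, N) with weak kernels and weak kernel pairs, if every weak kernel pair satisfies the condition (∗π₀), then the underlying pair (d, c) of every internal reflexive graph satisfies (∗π₀). -/
open CategoryTheory CategoryTheory.Limits

universe v u

variable {C : Type u} [Category.{v} C]

/-- A class of morphisms of a category. -/
abbrev MorClass (C : Type u) [Category.{v} C] :=
  ∀ ⦃X Y : C⦄, (X ⟶ Y) → Prop

/-- An ideal of morphisms: closed under pre- and post-composition with arbitrary morphisms. -/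
def IsMorIdeal (N : MorClass C) : Prop :=
  (∀ ⦃X Y Z : C⦄ (f : X ⟶ Y) (g : Y ⟶ Z), N g → N (f ≫ g)) ∧
  (∀ ⦃X Y Z : C⦄ (f : X ⟶ Y) (g : Y ⟶ Z), N f → N (f ≫ g))

/-- `k` is a weak `N`-kernel of `f`. -/
def IsWeakKernel (N : MorClass C) {K X Y : C} (f : X ⟶ Y) (k : K ⟶ X) : Prop :=
  N (k ≫ f) ∧ ∀ ⦃K' : C⦄ (k' : K' ⟶ X), N (k' ≫ f) → ∃ u : K' ⟶ K, u ≫ k = k'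

/-- `k` is an `N`-kernel of `f` (unique factorization). -/
def IsNKernel (N : MorClass C) {K X Y : C} (f : X ⟶ Y) (k : K ⟶ X) : Prop :=
  N (k ≫ f) ∧ ∀ ⦃K' : C⦄ (k' : K' ⟶ X), N (k' ≫ f) → ∃! u : K' ⟶ K, u ≫ k = k'

def HasWeakKernels (N : MorClass C) : Prop :=
  ∀ ⦃X Y : C⦄ (f : X ⟶ Y), ∃ (K : C) (k : K ⟶ X), IsWeakKernel N f k

def HasNKernels (N : MorClass C) : Prop :=
  ∀ ⦃X Y : C⦄ (f : X ⟶ Y), ∃ (K : C) (k : K ⟶ X), IsNKernel N f k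

/-- The condition (∗π₀) for a pair of parallel morphisms: for a weak `N`-kernel `k` of `f₁`
and any morphism `g`, `g f₁ k = g f₂ k ⟺ g f₁ = g f₂`. -/
def StarPi0 (N : MorClass C) {X Y : C} (f₁ f₂ : X ⟶ Y) : Prop :=
  ∀ ⦃K : C⦄ (k : K ⟶ X), IsWeakKernel N f₁ k →
    ∀ ⦃Z : C⦄ (g : Y ⟶ Z), (k ≫ f₁ ≫ g = k ≫ f₂ ≫ g ↔ f₁ ≫ g = f₂ ≫ g)

/-- `(u, v)` is a weak kernel pair of `f`. -/
def IsWeakKernelPair {P X Y : C} (f : X ⟶ Y) (u v : P ⟶ X) : Prop :=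
  u ≫ f = v ≫ f ∧ ∀ ⦃Q : C⦄ (u' v' : Q ⟶ X), u' ≫ f = v' ≫ f →
    ∃ w : Q ⟶ P, w ≫ u = u' ∧ w ≫ v = v'

/-- `(u, v)` is the kernel pair of `f`. -/
def IsKernelPairOf {P X Y : C} (f : X ⟶ Y) (u v : P ⟶ X) : Prop :=
  u ≫ f = v ≫ f ∧ ∀ ⦃Q : C⦄ (u' v' : Q ⟶ X), u' ≫ f = v' ≫ f →
    ∃! w : Q ⟶ P, w ≫ u = u' ∧ w ≫ v = v'

def HasWeakKernelPairs (C : Type u) [Category.{v} C] : Prop :=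
  ∀ ⦃X Y : C⦄ (f : X ⟶ Y), ∃ (P : C) (u v : P ⟶ X), IsWeakKernelPair f u v

def HasKernelPairs (C : Type u) [Category.{v} C] : Prop :=
  ∀ ⦃X Y : C⦄ (f : X ⟶ Y), ∃ (P : C) (u v : P ⟶ X), IsKernelPairOf f u v

/-- `f` is a coequalizer of the pair `(u, v)`. -/
def IsCoequalizerOf {P X Y : C} (u v : P ⟶ X) (f : X ⟶ Y) : Prop :=
  u ≫ f = v ≫ f ∧ ∀ ⦃Z : C⦄ (g : X ⟶ Z), u ≫ g = v ≫ g → ∃! h : Y ⟶ Z, f ≫ h = g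

/-- `f` is a regular epimorphism: a coequalizer of some pair. -/
def IsRegEpi {X Y : C} (f : X ⟶ Y) : Prop :=
  ∃ (P : C) (u v : P ⟶ X), IsCoequalizerOf u v f

/-- `(p₁, p₂)` is a pullback of `(f, g)`. -/
def IsPullbackSq {P X Y Z : C} (p₁ : P ⟶ X) (p₂ : P ⟶ Y) (f : X ⟶ Z) (g : Y ⟶ Z) : Prop :=
  p₁ ≫ f = p₂ ≫ g ∧ ∀ ⦃Q : C⦄ (q₁ : Q ⟶ X) (q₂ : Q ⟶ Y), q₁ ≫ f = q₂ ≫ g →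
    ∃! w : Q ⟶ P, w ≫ p₁ = q₁ ∧ w ≫ p₂ = q₂

/-- A regular category: finitely complete, kernel pairs have coequalizers, and
regular epimorphisms are stable under pullback. -/
structure IsRegularCat (C : Type u) [Category.{v} C] : Prop where
  hasFiniteLimits : HasFiniteLimits C
  coeqOfKernelPairs : ∀ ⦃P X Y : C⦄ (f : X ⟶ Y) (u v : P ⟶ X), IsKernelPairOf f u v →
    ∃ (Q : C) (q : X ⟶ Q), IsCoequalizerOf u v q
  regEpiStable : ∀ ⦃P X Y Z : C⦄ (p₁ : P ⟶ X) (p₂ : P ⟶ Y) (f : X ⟶ Z) (g : Y ⟶ Z),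
    IsPullbackSq p₁ p₂ f g → IsRegEpi g → IsRegEpi p₁

/-- `P` (a class of objects, regarded as a full subcategory) is a projective cover of `C`. -/
structure IsProjectiveCover (P : Set C) : Prop where
  proj : ∀ ⦃X : C⦄, X ∈ P → ∀ ⦃A B : C⦄ (e : A ⟶ B), IsRegEpi e →
    ∀ f : X ⟶ B, ∃ g : X ⟶ A, g ≫ e = f
  covers : ∀ X : C, ∃ (Q : C) (_ : Q ∈ P) (e : Q ⟶ X), IsRegEpi e

/-- An ideal of the full subcategory on `P`, encoded as a class of morphisms of `C`
supported on `P`-objects and closed under composition with `P`-morphisms. -/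
def IsMorIdealOn (P : Set C) (N : MorClass C) : Prop :=
  (∀ ⦃X Y : C⦄ (f : X ⟶ Y), N f → X ∈ P ∧ Y ∈ P) ∧
  (∀ ⦃X Y Z : C⦄ (f : X ⟶ Y) (g : Y ⟶ Z), X ∈ P → N g → N (f ≫ g)) ∧
  (∀ ⦃X Y Z : C⦄ (f : X ⟶ Y) (g : Y ⟶ Z), Z ∈ P → N f → N (f ≫ g))

/-- The extension `N^C` of an ideal `N` of the full subcategory `P` to `C`. -/
def extClass (P : Set C) (N : MorClass C) : MorClass C := fun X Y f =>
  ∃ (A B : C) (_ : A ∈ P) (_ : B ∈ P) (n : A ⟶ B) (e : A ⟶ X) (e' : B ⟶ Y),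
    IsRegEpi e ∧ IsRegEpi e' ∧ N n ∧ e ≫ f = n ≫ e'

/-- The restriction `M_P` of an ideal `M` of `C` to the full subcategory `P`. -/
def restClass (P : Set C) (M : MorClass C) : MorClass C := fun X Y f =>
  X ∈ P ∧ Y ∈ P ∧ M f

/-- `k` is a weak `N`-kernel of `f` computed in the full subcategory `P`. -/
def IsWeakKernelOn (P : Set C) (N : MorClass C) {K X Y : C} (f : X ⟶ Y) (k : K ⟶ X) : Prop :=
  K ∈ P ∧ N (k ≫ f) ∧ ∀ ⦃K' : C⦄, K' ∈ P → ∀ k' : K' ⟶ X, N (k' ≫ f) →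
    ∃ u : K' ⟶ K, u ≫ k = k'

def HasWeakKernelsOn (P : Set C) (N : MorClass C) : Prop :=
  ∀ ⦃X Y : C⦄, X ∈ P → Y ∈ P → ∀ f : X ⟶ Y, ∃ (K : C) (k : K ⟶ X), IsWeakKernelOn P N f k

/-- The condition (∗π₀) interpreted in the full subcategory `P`. -/
def StarPi0On (P : Set C) (N : MorClass C) {X Y : C} (f₁ f₂ : X ⟶ Y) : Prop :=
  ∀ ⦃K : C⦄ (k : K ⟶ X), IsWeakKernelOn P N f₁ k →
    ∀ ⦃Z : C⦄, Z ∈ P → ∀ g : Y ⟶ Z, (k ≫ f₁ ≫ g = k ≫ f₂ ≫ g ↔ f₁ ≫ g = f₂ ≫ g)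

/-- Every internal reflexive graph of `C` satisfies (∗π₀). -/
def ReflGraphsStarPi0 (N : MorClass C) : Prop :=
  ∀ ⦃G₁ G₀ : C⦄ (d c : G₁ ⟶ G₀) (e : G₀ ⟶ G₁), e ≫ d = 𝟙 G₀ → e ≫ c = 𝟙 G₀ →
    StarPi0 N d c

/-- Every internal reflexive graph of the full subcategory `P` satisfies (∗π₀). -/
def ReflGraphsStarPi0On (P : Set C) (N : MorClass C) : Prop :=
  ∀ ⦃G₁ G₀ : C⦄, G₁ ∈ P → G₀ ∈ P → ∀ (d c : G₁ ⟶ G₀) (e : G₀ ⟶ G₁),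
    e ≫ d = 𝟙 G₀ → e ≫ c = 𝟙 G₀ → StarPi0On P N d c

/-- Every regular epimorphism is a coequalizer of its kernel star (star-regularity condition). -/
def RegEpisCoeqOfKernelStar (N : MorClass C) : Prop :=
  ∀ ⦃X Y : C⦄ (f : X ⟶ Y), IsRegEpi f →
    ∀ ⦃P : C⦄ (u v : P ⟶ X), IsKernelPairOf f u v →
      ∀ ⦃K : C⦄ (k : K ⟶ P), IsNKernel N u k →
        IsCoequalizerOf (k ≫ u) (k ≫ v) f

/-- `f` is `N`-saturating. -/
def IsSaturating (N : MorClass C) {P' Y : C} (f : P' ⟶ Y) : Prop :=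
  ∀ ⦃X : C⦄ (n : X ⟶ Y), N n →
    ∃ (Z : C) (g : Z ⟶ X) (m : Z ⟶ P'), IsRegEpi g ∧ N m ∧ m ≫ f = g ≫ n

/-- `C` is a regular completion of `P`: `P` is a projective cover and every object of `C`
admits a monomorphism into a finite product of `P`-objects (expressed via a jointly monic
finite family). -/
def IsRegularCompletionOf (P : Set C) : Prop :=
  IsProjectiveCover P ∧
    ∀ X : C, ∃ (n : ℕ) (obj : Fin n → C) (_ : ∀ i, obj i ∈ P) (m : ∀ i, X ⟶ obj i),
      ∀ ⦃W : C⦄ (a b : W ⟶ X), (∀ i, a ≫ m i = b ≫ m i) → a = b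

/-- `C` is pointed via the ideal `N` of null morphisms. -/
def IsPointedVia (N : MorClass C) : Prop :=
  IsMorIdeal N ∧ ∀ X Y : C, ∃! f : X ⟶ Y, N f

/-- The full subcategory `P` is pointed via the ideal `N` of null morphisms. -/
def IsPointedOn (P : Set C) (N : MorClass C) : Prop :=
  IsMorIdealOn P N ∧ ∀ ⦃X Y : C⦄, X ∈ P → Y ∈ P → ∃! f : X ⟶ Y, N f

/-- `f` is a normal epimorphism (a cokernel) with respect to the ideal `N`. -/
def IsNormalEpi (N : MorClass C) {X Y : C} (f : X ⟶ Y) : Prop :=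
  ∃ (A : C) (h : A ⟶ X), N (h ≫ f) ∧
    ∀ ⦃Z : C⦄ (g : X ⟶ Z), N (h ≫ g) → ∃! t : Y ⟶ Z, f ≫ t = g

/-- In a multi-pointed category (C, N) with weak kernels and weak kernel pairs,
if every weak kernel pair satisfies (∗π₀), then the underlying pair of every internal
reflexive graph satisfies (∗π₀). -/
theorem statement0 (N : MorClass C) (hN : IsMorIdeal N)
    (hwk : HasWeakKernels N) (hwkp : HasWeakKernelPairs C)
    (h : ∀ ⦃P X Y : C⦄ (f : X ⟶ Y) (u v : P ⟶ X), IsWeakKernelPair f u v → StarPi0 N u v) :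
    ReflGraphsStarPi0 N := by
  intro G₁ G₀ d c e hed hec K k hk Z g
  constructor
  · intro hkg
    obtain ⟨P, u, v, hP⟩ := hwkp d
    obtain ⟨K', k', hk'⟩ := hwk u
    obtain ⟨w, hw1, hw2⟩ := hP.2 (𝟙 G₁) (d ≫ e)
      (by rw [Category.id_comp, Category.assoc, hed, Category.comp_id])
    have hNu : N (k' ≫ u) := hk'.1
    obtain ⟨s, hs⟩ := hk.2 (k' ≫ u) (hN.2 (k' ≫ u) d hNu)
    obtain ⟨t, ht⟩ := hk.2 (k' ≫ v)
      (by have := hN.2 (k' ≫ u) d hNu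
          have hvd : (k' ≫ v) ≫ d = (k' ≫ u) ≫ d := by
            rw [Category.assoc, Category.assoc, hP.1]
          rwa [hvd])
    have key : k' ≫ u ≫ c ≫ g = k' ≫ v ≫ c ≫ g := by
      have h1 : k' ≫ u ≫ c ≫ g = s ≫ k ≫ c ≫ g := by
        rw [← Category.assoc, ← hs, Category.assoc]
      have h2 : k' ≫ v ≫ c ≫ g = t ≫ k ≫ c ≫ g := by
        rw [← Category.assoc, ← ht, Category.assoc]
      rw [h1, h2, ← hkg]
      rw [show t ≫ k ≫ d ≫ g = k' ≫ v ≫ d ≫ g by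
            rw [← Category.assoc, ht, Category.assoc]]
      rw [show s ≫ k ≫ d ≫ g = k' ≫ u ≫ d ≫ g by
            rw [← Category.assoc, hs, Category.assoc]]
      rw [← Category.assoc u, ← Category.assoc v, hP.1]
    have huv : u ≫ c ≫ g = v ≫ c ≫ g := (h d u v hP k' hk' (c ≫ g)).mp key
    have : w ≫ u ≫ c ≫ g = w ≫ v ≫ c ≫ g := by rw [huv]
    rw [← Category.assoc, hw1, Category.id_comp, ← Category.assoc, hw2,
      Category.assoc, ← Category.assoc e, hec, Category.id_comp] at this
    exact this.symm
  · intro hdg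
    rw [hdg]
end

section
/- In a multi-pointed category (C, N) with weak kernels, weak kernel pairs, and kernel pairs, if every kernel pair satisfies (∗π₀), then every weak kernel pair satisfies (∗π₀). -/
open CategoryTheory CategoryTheory.Limits

universe v u

variable {C : Type u} [Category.{v} C]

/-- In a multi-pointed category (C, N) with weak kernels, weak kernel pairs,
and kernel pairs, if every kernel pair satisfies (∗π₀), then every weak kernel pair
satisfies (∗π₀). -/
theorem statement1 (N : MorClass C) (hN : IsMorIdeal N)
    (hwk : HasWeakKernels N) (hwkp : HasWeakKernelPairs C) (hkp : HasKernelPairs C)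
    (h : ∀ ⦃P X Y : C⦄ (f : X ⟶ Y) (u v : P ⟶ X), IsKernelPairOf f u v → StarPi0 N u v) :
    ∀ ⦃P X Y : C⦄ (f : X ⟶ Y) (u v : P ⟶ X), IsWeakKernelPair f u v → StarPi0 N u v := by
  intro P X Y f u v hw K k hk Z g
  constructor
  · intro hkg
    -- take the kernel pair of f
    obtain ⟨KP, p₁, p₂, hcomm, huniv⟩ := hkp f
    -- comparison t : KP ⟶ P from weak universality
    obtain ⟨t, ht₁, ht₂⟩ := hw.2 p₁ p₂ hcomm
    -- take a weak N-kernel of p₁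
    obtain ⟨K', k', hk'⟩ := hwk p₁
    -- k' ≫ t factors through k, since N ((k' ≫ t) ≫ u)
    have hNk : N ((k' ≫ t) ≫ u) := by
      rw [Category.assoc, ht₁]; exact hk'.1
    obtain ⟨w, hw'⟩ := hk.2 (k' ≫ t) hNk
    -- deduce k' ≫ p₁ ≫ g = k' ≫ p₂ ≫ g
    have key : k' ≫ p₁ ≫ g = k' ≫ p₂ ≫ g := by
      have e1 : k' ≫ p₁ ≫ g = w ≫ k ≫ u ≫ g := by
        simp only [← ht₁, hw', ← Category.assoc]
      have e2 : k' ≫ p₂ ≫ g = w ≫ k ≫ v ≫ g := by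
        simp only [← ht₂, hw', ← Category.assoc]
      rw [e1, e2, hkg]
    -- apply StarPi0 for the kernel pair
    have h2 : p₁ ≫ g = p₂ ≫ g :=
      ((h f p₁ p₂ ⟨hcomm, huniv⟩) k' hk' g).mp key
    -- comparison s : P ⟶ KP, then u = s ≫ p₁, v = s ≫ p₂
    obtain ⟨s, hs₁, hs₂⟩ := (huniv u v hw.1).exists
    calc u ≫ g = s ≫ p₁ ≫ g := by rw [← hs₁, Category.assoc]
      _ = s ≫ p₂ ≫ g := by rw [h2]
      _ = v ≫ g := by rw [← hs₂, Category.assoc]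
  · intro hg
    rw [hg]
end

section
/- In a multi-pointed category (C, N) with weak kernels and weak kernel pairs, the following are equivalent: (a) the underlying pair of every internal reflexive graph satisfies (∗π₀); (b) every weak kernel pair satisfies (∗π₀). If moreover C has kernel pairs, these are further equivalent to: (c) every reflexive relation satisfies (∗π₀); (d) every kernel pair satisfies (∗π₀). -/
open CategoryTheory CategoryTheory.Limits

universe v u

variable {C : Type u} [Category.{v} C]

/-- Key lemma: if `(u, v)` is a weak kernel pair of `d` satisfying (∗π₀), and `(d, c, e)` is a
reflexive graph, then `(d, c)` satisfies (∗π₀). -/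
lemma starPi0_of_reflGraph (N : MorClass C) (hN : IsMorIdeal N) (hwk : HasWeakKernels N)
    {G₁ G₀ : C} (d c : G₁ ⟶ G₀) (e : G₀ ⟶ G₁) (hd : e ≫ d = 𝟙 G₀) (hc : e ≫ c = 𝟙 G₀)
    {P : C} (u v : P ⟶ G₁) (huv : IsWeakKernelPair d u v) (hstar : StarPi0 N u v) :
    StarPi0 N d c := by
  intro K k hk Z g
  constructor
  · intro h
    -- a weak kernel of u
    obtain ⟨K', k', hk'⟩ := hwk u
    -- factor k' ≫ u and k' ≫ v through k
    have hNu : N ((k' ≫ u) ≫ d) := hN.2 (k' ≫ u) d hk'.1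
    have hNv : N ((k' ≫ v) ≫ d) := by
      have : (k' ≫ v) ≫ d = (k' ≫ u) ≫ d := by
        rw [Category.assoc, Category.assoc, huv.1]
      rw [this]; exact hNu
    obtain ⟨s, hs⟩ := hk.2 (k' ≫ u) hNu
    obtain ⟨t, ht⟩ := hk.2 (k' ≫ v) hNv
    -- show k' ≫ u ≫ (c ≫ g) = k' ≫ v ≫ (c ≫ g)
    have hmain : k' ≫ u ≫ c ≫ g = k' ≫ v ≫ c ≫ g := by
      calc k' ≫ u ≫ c ≫ g = s ≫ k ≫ c ≫ g := by
            rw [← Category.assoc, ← hs, Category.assoc]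
        _ = s ≫ k ≫ d ≫ g := by rw [h]
        _ = k' ≫ u ≫ d ≫ g := by rw [← Category.assoc, hs, Category.assoc]
        _ = k' ≫ v ≫ d ≫ g := by
            rw [← Category.assoc u d, huv.1, Category.assoc]
        _ = t ≫ k ≫ d ≫ g := by rw [← Category.assoc, ← ht, Category.assoc]
        _ = t ≫ k ≫ c ≫ g := by rw [h]
        _ = k' ≫ v ≫ c ≫ g := by rw [← Category.assoc, ht, Category.assoc]
    have huc : u ≫ c ≫ g = v ≫ c ≫ g := (hstar k' hk' (c ≫ g)).mp hmain
    -- use the reflexivity w : w ≫ u = 𝟙, w ≫ v = d ≫ e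
    obtain ⟨w, hw1, hw2⟩ := huv.2 (𝟙 G₁) (d ≫ e) (by
      rw [Category.id_comp, Category.assoc, hd, Category.comp_id])
    calc d ≫ g = d ≫ 𝟙 G₀ ≫ g := by rw [Category.id_comp]
      _ = d ≫ (e ≫ c) ≫ g := by rw [hc]
      _ = (d ≫ e) ≫ c ≫ g := by simp only [Category.assoc]
      _ = (w ≫ v) ≫ c ≫ g := by rw [hw2]
      _ = w ≫ v ≫ c ≫ g := by rw [Category.assoc]
      _ = w ≫ u ≫ c ≫ g := by rw [huc]
      _ = (w ≫ u) ≫ c ≫ g := by rw [Category.assoc]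
      _ = c ≫ g := by rw [hw1, Category.id_comp]
  · intro h; rw [h]

/-- A weak kernel pair is a reflexive graph. -/
lemma wkp_refl {P X Y : C} (f : X ⟶ Y) (u v : P ⟶ X) (huv : IsWeakKernelPair f u v) :
    ∃ w : X ⟶ P, w ≫ u = 𝟙 X ∧ w ≫ v = 𝟙 X :=
  huv.2 (𝟙 X) (𝟙 X) rfl

lemma kp_wkp {P X Y : C} (f : X ⟶ Y) (u v : P ⟶ X) (huv : IsKernelPairOf f u v) :
    IsWeakKernelPair f u v :=
  ⟨huv.1, fun _ u' v' h => (huv.2 u' v' h).exists⟩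

/-- In a multi-pointed category (C, N) with weak kernels and weak kernel pairs:
(a) every reflexive graph satisfies (∗π₀) iff (b) every weak kernel pair satisfies (∗π₀);
and if moreover C has kernel pairs, these are further equivalent to (c) every reflexive
relation satisfying (∗π₀) and to (d) every kernel pair satisfying (∗π₀). -/
theorem statement2 (N : MorClass C) (hN : IsMorIdeal N)
    (hwk : HasWeakKernels N) (hwkp : HasWeakKernelPairs C) :
    (ReflGraphsStarPi0 N ↔
      ∀ ⦃P X Y : C⦄ (f : X ⟶ Y) (u v : P ⟶ X), IsWeakKernelPair f u v → StarPi0 N u v) ∧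
    (HasKernelPairs C →
      ((ReflGraphsStarPi0 N ↔
        ∀ ⦃G₁ G₀ : C⦄ (d c : G₁ ⟶ G₀) (e : G₀ ⟶ G₁), e ≫ d = 𝟙 G₀ → e ≫ c = 𝟙 G₀ →
          (∀ ⦃W : C⦄ (a b : W ⟶ G₁), a ≫ d = b ≫ d → a ≫ c = b ≫ c → a = b) →
          StarPi0 N d c) ∧
       (ReflGraphsStarPi0 N ↔
        ∀ ⦃P X Y : C⦄ (f : X ⟶ Y) (u v : P ⟶ X), IsKernelPairOf f u v → StarPi0 N u v))) := by
  -- (d) for kernel pairs implies (a)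
  have key : ∀ (_ : HasKernelPairs C)
      (_ : ∀ ⦃P X Y : C⦄ (f : X ⟶ Y) (u v : P ⟶ X), IsKernelPairOf f u v → StarPi0 N u v),
      ReflGraphsStarPi0 N := by
    intro hkp hd G₁ G₀ d c e hde hce
    obtain ⟨P, u, v, huv⟩ := hkp d
    exact starPi0_of_reflGraph N hN hwk d c e hde hce u v (kp_wkp d u v huv) (hd d u v huv)
  have aimpd : ReflGraphsStarPi0 N →
      ∀ ⦃P X Y : C⦄ (f : X ⟶ Y) (u v : P ⟶ X), IsKernelPairOf f u v → StarPi0 N u v := by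
    intro ha P X Y f u v huv
    obtain ⟨w, hw1, hw2⟩ := wkp_refl f u v (kp_wkp f u v huv)
    exact ha u v w hw1 hw2
  refine ⟨⟨?_, ?_⟩, fun hkp => ⟨⟨?_, ?_⟩, aimpd, key hkp⟩⟩
  · intro ha P X Y f u v huv
    obtain ⟨w, hw1, hw2⟩ := wkp_refl f u v huv
    exact ha u v w hw1 hw2
  · intro hb G₁ G₀ d c e hde hce
    obtain ⟨P, u, v, huv⟩ := hwkp d
    exact starPi0_of_reflGraph N hN hwk d c e hde hce u v huv (hb d u v huv)
  · intro ha G₁ G₀ d c e hde hce _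
    exact ha d c e hde hce
  · -- (c) → (a): kernel pairs are reflexive relations
    intro hc
    apply key hkp
    intro P X Y f u v huv
    obtain ⟨w, hw1, hw2⟩ := wkp_refl f u v (kp_wkp f u v huv)
    refine hc u v w hw1 hw2 ?_
    intro W a b h1 h2
    have hf : (a ≫ u) ≫ f = (a ≫ v) ≫ f := by
      rw [Category.assoc, Category.assoc, huv.1]
    obtain ⟨m, _, hmuniq⟩ := huv.2 (a ≫ u) (a ≫ v) hf
    exact (hmuniq a ⟨rfl, rfl⟩).trans (hmuniq b ⟨h1.symm, h2.symm⟩).symm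
end

section
/- Let C be a regular category with projective cover P. For any ideal N in P, the restriction to P of the extension of N to C equals N, i.e. (N^C)_P = N. -/
open CategoryTheory CategoryTheory.Limits

universe v u

variable {C : Type u} [Category.{v} C]

/-- For a regular category C with projective cover P and any ideal N in P,
the restriction to P of the extension of N to C equals N: (N^C)_P = N. -/
theorem statement4 (hC : IsRegularCat C) (P : Set C) (hP : IsProjectiveCover P)
    (N : MorClass C) (hN : IsMorIdealOn P N) :
    restClass P (extClass P N) = N := by
  funext X Y
  ext f
  constructor
  · rintro ⟨hX, hY, A, B, hA, hB, n, e, e', he, he', hn, hsq⟩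
    obtain ⟨s, hs⟩ := hP.proj hX e he (𝟙 X)
    have : f = s ≫ n ≫ e' := by
      calc f = (s ≫ e) ≫ f := by rw [hs]; simp
      _ = s ≫ n ≫ e' := by rw [Category.assoc, hsq]
    rw [this, ← Category.assoc]
    exact hN.2.2 _ _ hY (hN.2.1 _ _ hX hn)
  · intro hf
    obtain ⟨hX, hY⟩ := hN.1 f hf
    have idcoeq : ∀ (Z : C), IsRegEpi (𝟙 Z) := fun Z =>
      ⟨Z, 𝟙 Z, 𝟙 Z, rfl, fun _ g _ => ⟨g, by simp, fun h hh => by simpa using hh⟩⟩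
    exact ⟨hX, hY, X, Y, hX, hY, f, 𝟙 X, 𝟙 Y, idcoeq X, idcoeq Y, hf, by simp⟩
end

section
/- Let C be a regular category with projective cover P and let N be an ideal in P. If P has weak N-kernels, then C has N^C-kernels. -/
open CategoryTheory CategoryTheory.Limits

universe v u

variable {C : Type u} [Category.{v} C]

section Aux

/-- A coequalizer is an epimorphism. -/
lemma coeq_epi {P X Y : C} {u v : P ⟶ X} {f : X ⟶ Y} (hf : IsCoequalizerOf u v f)
    {Z : C} (g h' : Y ⟶ Z) (hgh : f ≫ g = f ≫ h') : g = h' := by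
  obtain ⟨huv, huniv⟩ := hf
  obtain ⟨t, -, ht⟩ := huniv (f ≫ g) (by rw [← Category.assoc, ← Category.assoc, huv])
  exact (ht g rfl).trans (ht h' hgh.symm).symm

lemma regEpi_epi {X Y : C} {f : X ⟶ Y} (hf : IsRegEpi f)
    {Z : C} (g h' : Y ⟶ Z) (hgh : f ≫ g = f ≫ h') : g = h' := by
  obtain ⟨P, u, v, hco⟩ := hf
  exact coeq_epi hco g h' hgh

/-- Pullbacks exist in a finitely complete category. -/
lemma exists_pullbackSq [HasFiniteLimits C] {X Y Z : C} (f : X ⟶ Z) (g : Y ⟶ Z) :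
    ∃ (P : C) (p₁ : P ⟶ X) (p₂ : P ⟶ Y), IsPullbackSq p₁ p₂ f g := by
  refine ⟨pullback f g, pullback.fst f g, pullback.snd f g, pullback.condition, ?_⟩
  intro Q q₁ q₂ hq
  refine ⟨pullback.lift q₁ q₂ hq, ⟨pullback.lift_fst _ _ _, pullback.lift_snd _ _ _⟩, ?_⟩
  rintro w ⟨hw1, hw2⟩
  apply pullback.hom_ext
  · rw [hw1]; exact (pullback.lift_fst _ _ _).symm
  · rw [hw2]; exact (pullback.lift_snd _ _ _).symm

/-- Kernel pairs exist in a finitely complete category. -/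
lemma exists_kernelPair [HasFiniteLimits C] {X Y : C} (f : X ⟶ Y) :
    ∃ (P : C) (u v : P ⟶ X), IsKernelPairOf f u v := by
  obtain ⟨P, u, v, h1, h2⟩ := exists_pullbackSq f f
  exact ⟨P, u, v, h1, h2⟩

/-- Image factorization in a regular category: every morphism factors as a regular
epimorphism followed by a monomorphism. -/
lemma exists_image (hC : IsRegularCat C) {X Y : C} (f : X ⟶ Y) :
    ∃ (I : C) (r : X ⟶ I) (m : I ⟶ Y), IsRegEpi r ∧ r ≫ m = f ∧
      ∀ ⦃T : C⦄ (a b : T ⟶ I), a ≫ m = b ≫ m → a = b := by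
  haveI := hC.hasFiniteLimits
  obtain ⟨P, u, v, hkp⟩ := exists_kernelPair f
  obtain ⟨I, q, hq⟩ := hC.coeqOfKernelPairs f u v hkp
  obtain ⟨m, hm, -⟩ := hq.2 f hkp.1
  refine ⟨I, q, m, ⟨P, u, v, hq⟩, hm, ?_⟩
  intro T a b hab
  -- pull back q along a, then along (pa₁ ≫ b)
  obtain ⟨Ta, pa₁, pa₂, hpba⟩ := exists_pullbackSq a q
  have hpa₁ : IsRegEpi pa₁ := hC.regEpiStable pa₁ pa₂ a q hpba ⟨P, u, v, hq⟩
  obtain ⟨S, r₁, r₂, hpbb⟩ := exists_pullbackSq (pa₁ ≫ b) q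
  have hr₁ : IsRegEpi r₁ := hC.regEpiStable r₁ r₂ (pa₁ ≫ b) q hpbb ⟨P, u, v, hq⟩
  -- s := r₁ ≫ pa₁ is epi; x := r₁ ≫ pa₂, y := r₂
  have hx : (r₁ ≫ pa₂) ≫ q = (r₁ ≫ pa₁) ≫ a := by
    rw [Category.assoc, ← hpba.1, Category.assoc]
  have hy : r₂ ≫ q = (r₁ ≫ pa₁) ≫ b := by
    rw [hpbb.1.symm, Category.assoc]
  have hxyf : (r₁ ≫ pa₂) ≫ f = r₂ ≫ f := by
    rw [← hm, ← Category.assoc, ← Category.assoc, hx, hy,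
      Category.assoc, Category.assoc, Category.assoc, Category.assoc, hab]
  obtain ⟨w, ⟨hwu, hwv⟩, -⟩ := hkp.2 (r₁ ≫ pa₂) r₂ hxyf
  have hsab : (r₁ ≫ pa₁) ≫ a = (r₁ ≫ pa₁) ≫ b := by
    rw [← hx, ← hy, ← hwu, ← hwv, Category.assoc, Category.assoc, hq.1]
  -- cancel the epi r₁ ≫ pa₁
  exact regEpi_epi hpa₁ a b (regEpi_epi hr₁ (pa₁ ≫ a) (pa₁ ≫ b)
    (by simpa [Category.assoc] using hsab))

/-- Descent along a regular epi through a mono. -/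
lemma descend_regEpi {A K' I X : C} {e : A ⟶ K'} (he : IsRegEpi e) {m : I ⟶ X}
    (hm : ∀ ⦃T : C⦄ (a b : T ⟶ I), a ≫ m = b ≫ m → a = b)
    {k' : K' ⟶ X} {g : A ⟶ I} (hg : e ≫ k' = g ≫ m) : ∃ h : K' ⟶ I, h ≫ m = k' := by
  obtain ⟨P, u, v, huv, huniv⟩ := he
  have hug : u ≫ g = v ≫ g := by
    apply hm
    rw [Category.assoc, Category.assoc, ← hg, ← Category.assoc, ← Category.assoc, huv]
  obtain ⟨t, ht, -⟩ := huniv g hug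
  refine ⟨t, ?_⟩
  apply regEpi_epi ⟨P, u, v, huv, huniv⟩
  rw [← Category.assoc, ht, ← hg]

end Aux

/-- For a regular category C with projective cover P and an ideal N in P,
if P has weak N-kernels then C has N^C-kernels. -/
theorem statement5 (hC : IsRegularCat C) (P : Set C) (hP : IsProjectiveCover P)
    (N : MorClass C) (hN : IsMorIdealOn P N) (h : HasWeakKernelsOn P N) :
    HasNKernels (extClass P N) := by
  haveI := hC.hasFiniteLimits
  intro X Y f
  -- cover Y by a projective
  obtain ⟨Q, hQ, eC, heC⟩ := hP.covers Y
  -- pull back f along the cover eC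
  obtain ⟨D, p₁, p₂, hpb⟩ := exists_pullbackSq f eC
  -- cover the pullback
  obtain ⟨PD, hPD, qD, hqD⟩ := hP.covers D
  -- weak N-kernel of qD ≫ p₂ in P
  obtain ⟨K, k, hKP, hkN, hkuniv⟩ := h hPD hQ (qD ≫ p₂)
  -- image factorization of k ≫ qD ≫ p₁
  obtain ⟨I, r, m, hr, hrm, hm⟩ := exists_image hC (k ≫ qD ≫ p₁)
  refine ⟨I, m, ?_, ?_⟩
  · -- m ≫ f is in extClass P N
    refine ⟨K, Q, hKP, hQ, k ≫ qD ≫ p₂, r, eC, hr, heC, ?_, ?_⟩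
    · simpa [Category.assoc] using hkN
    · rw [← Category.assoc, hrm, Category.assoc, Category.assoc, hpb.1]
      simp [Category.assoc]
  · -- universal property
    intro K' k' hk'
    obtain ⟨A, B', hA, hB', n, e, e', he, he', hn, hcomm⟩ := hk'
    -- lift e' through the cover eC
    obtain ⟨s, hs⟩ := hP.proj hB' eC heC e'
    -- lift into the pullback
    have hlift : (e ≫ k') ≫ f = (n ≫ s) ≫ eC := by
      rw [Category.assoc, hcomm, Category.assoc, hs]
    obtain ⟨w, ⟨hw1, hw2⟩, -⟩ := hpb.2 (e ≫ k') (n ≫ s) hlift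
    -- lift w through the cover qD
    obtain ⟨t, ht⟩ := hP.proj hA qD hqD w
    -- t ≫ (qD ≫ p₂) is in N
    have htN : N (t ≫ (qD ≫ p₂)) := by
      have : t ≫ (qD ≫ p₂) = n ≫ s := by
        rw [← Category.assoc, ht, hw2]
      rw [this]
      exact hN.2.2 n s hQ hn
    obtain ⟨u', hu'⟩ := hkuniv hA t htN
    -- e ≫ k' = (u' ≫ r) ≫ m
    have hfac : e ≫ k' = (u' ≫ r) ≫ m := by
      rw [Category.assoc, hrm, ← hw1, ← ht, ← hu']
      simp [Category.assoc]
    obtain ⟨h', hh'⟩ := descend_regEpi he hm hfac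
    refine ⟨h', hh', ?_⟩
    intro y hy
    exact hm y h' (hy.trans hh'.symm)
end

section
/- Let C be a regular category with projective cover P and let N be an ideal in P. If C has N^C-kernels, then P has weak N-kernels; explicitly, if k : K → Q is an N^C-kernel in C of a morphism u : Q → R of P, and p : P' → K is a regular epimorphism with P' ∈ P, then kp is a weak N-kernel of u in P. -/
open CategoryTheory CategoryTheory.Limits

universe v u

variable {C : Type u} [Category.{v} C]

/-- For a regular category C with projective cover P and an ideal N in P,
if C has N^C-kernels then P has weak N-kernels; explicitly, if k is an N^C-kernel in C
of a morphism u of P and p is a regular epimorphism onto its domain from a P-object,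
then kp is a weak N-kernel of u in P. -/
theorem statement6 (hC : IsRegularCat C) (P : Set C) (hP : IsProjectiveCover P)
    (N : MorClass C) (hN : IsMorIdealOn P N) (h : HasNKernels (extClass P N)) :
    HasWeakKernelsOn P N ∧
      ∀ ⦃Q R K P' : C⦄, Q ∈ P → R ∈ P → P' ∈ P →
        ∀ (u : Q ⟶ R) (k : K ⟶ Q), IsNKernel (extClass P N) u k →
          ∀ p : P' ⟶ K, IsRegEpi p → IsWeakKernelOn P N u (p ≫ k) := by
  have idRegEpi : ∀ X : C, IsRegEpi (𝟙 X) := fun X =>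
    ⟨X, 𝟙 X, 𝟙 X, rfl, fun Z g _ => ⟨g, by simp, fun h hh => by simpa using hh⟩⟩
  have main : ∀ ⦃Q R K P' : C⦄, Q ∈ P → R ∈ P → P' ∈ P →
      ∀ (u : Q ⟶ R) (k : K ⟶ Q), IsNKernel (extClass P N) u k →
        ∀ p : P' ⟶ K, IsRegEpi p → IsWeakKernelOn P N u (p ≫ k) := by
    intro Q R K P' hQ hR hP' u k hk p hp
    refine ⟨hP', ?_, ?_⟩
    · -- N ((p ≫ k) ≫ u)
      obtain ⟨A, B, hA, hB, n, e, e', he, he', hn, heq⟩ := hk.1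
      obtain ⟨g, hg⟩ := hP.proj hP' e he p
      have : (p ≫ k) ≫ u = g ≫ (n ≫ e') := by
        rw [← heq]
        rw [← hg]
        simp
      rw [this]
      rw [← Category.assoc]
      exact hN.2.2 _ _ hR (hN.2.1 _ _ hP' hn)
    · intro K' hK' k' hk'
      have hext : extClass P N (k' ≫ u) :=
        ⟨K', R, hK', hR, k' ≫ u, 𝟙 K', 𝟙 R, idRegEpi _, idRegEpi _, hk', by simp⟩
      obtain ⟨w, hw, -⟩ := hk.2 k' hext
      obtain ⟨v, hv⟩ := hP.proj hK' p hp w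
      exact ⟨v, by rw [← Category.assoc, hv, hw]⟩
  refine ⟨?_, main⟩
  intro X Y hX hY f
  obtain ⟨K, k, hk⟩ := h f
  obtain ⟨P', hP', p, hp⟩ := hP.covers K
  exact ⟨P', p ≫ k, main hX hY hP' f k hk p hp⟩
end

section
/- Let C be a regular category with projective cover P and let N be an ideal in C admitting N-kernels. Then (N_P)^C ⊆ N. -/
open CategoryTheory CategoryTheory.Limits

universe v u

variable {C : Type u} [Category.{v} C]

/-- For a regular category C with projective cover P and an ideal N in C
admitting N-kernels, (N_P)^C ⊆ N. -/
theorem statement7 (hC : IsRegularCat C) (P : Set C) (hP : IsProjectiveCover P)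
    (N : MorClass C) (hN : IsMorIdeal N) (hk : HasNKernels N) :
    ∀ ⦃X Y : C⦄ (f : X ⟶ Y), extClass P (restClass P N) f → N f := by
  intro X Y f hf
  obtain ⟨A, B, hA, hB, n, e, e', he, he', hn, hsq⟩ := hf
  obtain ⟨K, k, hkN, hkU⟩ := hk f
  -- e ≫ f ∈ N since e ≫ f = n ≫ e' and N n
  have heN : N (e ≫ f) := by
    rw [hsq]; exact hN.2 n e' hn.2.2
  obtain ⟨u, hu, _⟩ := hkU e heN
  -- k is mono
  have kmono : ∀ ⦃W : C⦄ (a b : W ⟶ K), a ≫ k = b ≫ k → a = b := by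
    intro W a b hab
    have hN' : N ((a ≫ k) ≫ f) := by rw [Category.assoc]; exact hN.1 a (k ≫ f) hkN
    obtain ⟨w, hw, hwu⟩ := hkU (a ≫ k) hN'
    have h1 : a = w := hwu a rfl
    have h2 : b = w := hwu b hab.symm
    rw [h1, h2]
  obtain ⟨P0, s, t, hst, hcoeq⟩ := he
  have hsu : s ≫ u = t ≫ u := by
    apply kmono
    rw [Category.assoc, Category.assoc, hu, hst]
  obtain ⟨h, hh, _⟩ := hcoeq u hsu
  -- h ≫ k = 𝟙 X
  have hhk : h ≫ k = 𝟙 X := by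
    obtain ⟨z, hz, hzu⟩ := hcoeq e hst
    have h1 : h ≫ k = z := hzu (h ≫ k) (show e ≫ (h ≫ k) = e by rw [← Category.assoc, hh, hu])
    have h2 : 𝟙 X = z := hzu (𝟙 X) (Category.comp_id e)
    rw [h1, ← h2]
  -- f = h ≫ (k ≫ f)
  have : f = h ≫ (k ≫ f) := by rw [← Category.assoc, hhk, Category.id_comp]
  rw [this]
  exact hN.1 h (k ≫ f) hkN
end

section
/- Let C be a regular category with projective cover P and let N be an ideal in C. Then N ⊆ (N_P)^C if and only if every regular epimorphism in C is N-saturating. -/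
open CategoryTheory CategoryTheory.Limits

universe v u

variable {C : Type u} [Category.{v} C]

/-- For a regular category C with projective cover P and an ideal N in C,
N ⊆ (N_P)^C if and only if every regular epimorphism in C is N-saturating. -/
theorem statement8 (hC : IsRegularCat C) (P : Set C) (hP : IsProjectiveCover P)
    (N : MorClass C) (hN : IsMorIdeal N) :
    (∀ ⦃X Y : C⦄ (f : X ⟶ Y), N f → extClass P (restClass P N) f) ↔
      (∀ ⦃X Y : C⦄ (f : X ⟶ Y), IsRegEpi f → IsSaturating N f) := by
  constructor
  · intro h X Y f hf X' n hn
    obtain ⟨A, B, hA, hB, n', e, e', he, he', hn', hcomm⟩ := h n hn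
    obtain ⟨_, _, hNn'⟩ := hn'
    obtain ⟨t, ht⟩ := hP.proj hB f hf e'
    exact ⟨A, e, n' ≫ t, he, hN.2 n' t hNn', by
      rw [Category.assoc, ht, ← hcomm]⟩
  · intro h X Y n hn
    obtain ⟨B, hB, e', he'⟩ := hP.covers Y
    obtain ⟨Z, g, m, hg, hm, hme⟩ := h e' he' n hn
    obtain ⟨A, hA, q, hq⟩ := hP.covers X
    obtain ⟨t, ht⟩ := hP.proj hA g hg q
    refine ⟨A, B, hA, hB, t ≫ m, q, e', hq, he', ⟨hA, hB, hN.1 t m hm⟩, ?_⟩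
    rw [← ht, Category.assoc, Category.assoc, hme]
end

section
/- Let C be a regular category with projective cover P and let N be an ideal in P. Then every regular epimorphism in C is N^C-saturating. -/
open CategoryTheory CategoryTheory.Limits

universe v u

variable {C : Type u} [Category.{v} C]

/-- For a regular category C with projective cover P and an ideal N in P,
every regular epimorphism in C is N^C-saturating. -/
theorem statement9 (hC : IsRegularCat C) (P : Set C) (hP : IsProjectiveCover P)
    (N : MorClass C) (hN : IsMorIdealOn P N) :
    ∀ ⦃X Y : C⦄ (f : X ⟶ Y), IsRegEpi f → IsSaturating (extClass P N) f := by
  intro X Y f hf X' n hn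
  obtain ⟨A, B, hA, hB, n₀, e, e', he, he', hn₀, hcomm⟩ := hn
  -- lift e' : B ⟶ Y through f
  obtain ⟨s, hs⟩ := hP.proj hB f hf e'
  -- cover X by a P-object
  obtain ⟨Q, hQ, q, hq⟩ := hP.covers X
  -- lift s through q
  obtain ⟨t, ht⟩ := hP.proj hB q hq s
  have hid : IsRegEpi (𝟙 A) := by
    refine ⟨A, 𝟙 A, 𝟙 A, rfl, fun Z g _ => ⟨g, by simp, fun h hh => by simpa using hh⟩⟩
  refine ⟨A, e, n₀ ≫ t ≫ q, he, ⟨A, Q, hA, hQ, n₀ ≫ t, 𝟙 A, q, hid, hq,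
    hN.2.2 n₀ t hQ hn₀, by simp⟩, ?_⟩
  have : (n₀ ≫ t ≫ q) ≫ f = n₀ ≫ e' := by
    rw [← hs, ← ht]; simp
  rw [this, ← hcomm]
end

section
/- Let C be a regular category with projective cover P. The assignments N ↦ N^C and M ↦ M_P establish an order isomorphism between the poset of ideals of P admitting weak kernels and the poset of ideals of C admitting kernels and for which all regular epimorphisms are saturating. -/
open CategoryTheory CategoryTheory.Limits

universe v u

variable {C : Type u} [Category.{v} C]

/-- Inclusion of classes of morphisms. -/
def MorClassLe (N N' : MorClass C) : Prop := ∀ ⦃X Y : C⦄ (f : X ⟶ Y), N f → N' f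

/-! ### Auxiliary infrastructure for statement10 -/

/-- Monomorphism predicate. -/
def stmt10MonoP {X Y : C} (m : X ⟶ Y) : Prop :=
  ∀ ⦃T : C⦄ (a b : T ⟶ X), a ≫ m = b ≫ m → a = b

lemma stmt10_regEpi_id (X : C) : IsRegEpi (𝟙 X) :=
  ⟨X, 𝟙 X, 𝟙 X, rfl, fun _Z g _ =>
    ⟨g, Category.id_comp g, fun y hy => by simpa using hy⟩⟩

lemma stmt10_regEpi_epi {X Y : C} {f : X ⟶ Y} (hf : IsRegEpi f) {Z : C} (a b : Y ⟶ Z)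
    (h : f ≫ a = f ≫ b) : a = b := by
  obtain ⟨P, u, v, huv, hcoeq⟩ := hf
  obtain ⟨t, _ht, huniq⟩ := hcoeq (f ≫ a)
    (by rw [← Category.assoc, huv, Category.assoc])
  exact (huniq a rfl).trans (huniq b h.symm).symm

lemma stmt10_regEpi_lift {A B X Y : C} {e : A ⟶ B} (he : IsRegEpi e) {m : X ⟶ Y}
    (hm : stmt10MonoP m) (s : A ⟶ X) (t : B ⟶ Y) (hc : s ≫ m = e ≫ t) :
    ∃ d : B ⟶ X, e ≫ d = s ∧ d ≫ m = t := by
  obtain ⟨P, u, v, huv, hcoeq⟩ := he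
  have hs : u ≫ s = v ≫ s := by
    apply hm
    rw [Category.assoc, Category.assoc, hc, ← Category.assoc, huv, Category.assoc]
  obtain ⟨d, hd, -⟩ := hcoeq s hs
  refine ⟨d, hd, ?_⟩
  apply stmt10_regEpi_epi ⟨P, u, v, huv, hcoeq⟩
  rw [← Category.assoc, hd, hc]

lemma stmt10_pb_exists (hL : HasFiniteLimits C) {X Y Z : C} (f : X ⟶ Z) (g : Y ⟶ Z) :
    ∃ (P : C) (p₁ : P ⟶ X) (p₂ : P ⟶ Y), IsPullbackSq p₁ p₂ f g := by
  haveI := hL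
  refine ⟨pullback f g, pullback.fst f g, pullback.snd f g, pullback.condition, ?_⟩
  intro Q q₁ q₂ hq
  exact ⟨pullback.lift q₁ q₂ hq, ⟨pullback.lift_fst _ _ _, pullback.lift_snd _ _ _⟩,
    fun w hw => pullback.hom_ext (hw.1.trans (pullback.lift_fst _ _ _).symm)
      (hw.2.trans (pullback.lift_snd _ _ _).symm)⟩

lemma stmt10_kp_exists (hL : HasFiniteLimits C) {X Y : C} (f : X ⟶ Y) :
    ∃ (R : C) (a b : R ⟶ X), IsKernelPairOf f a b := by
  obtain ⟨P, p₁, p₂, hcond, huniv⟩ := stmt10_pb_exists hL f f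
  exact ⟨P, p₁, p₂, hcond, fun Q u' v' h => huniv u' v' h⟩

lemma stmt10_pb_regEpi (hC : IsRegularCat C) {X Y Z : C} (f : X ⟶ Z) {g : Y ⟶ Z}
    (hg : IsRegEpi g) :
    ∃ (P : C) (p₁ : P ⟶ X) (p₂ : P ⟶ Y), IsPullbackSq p₁ p₂ f g ∧ IsRegEpi p₁ := by
  obtain ⟨P, p₁, p₂, hpb⟩ := stmt10_pb_exists hC.hasFiniteLimits f g
  exact ⟨P, p₁, p₂, hpb, hC.regEpiStable p₁ p₂ f g hpb hg⟩

lemma stmt10_factor_mono (hC : IsRegularCat C) {X Z R Q : C} {h : X ⟶ Z} {a b : R ⟶ X}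
    (hkp : IsKernelPairOf h a b) {q : X ⟶ Q} (hq : IsCoequalizerOf a b q)
    {m : Q ⟶ Z} (hm : q ≫ m = h) : stmt10MonoP m := by
  intro T x y hxy
  have hqre : IsRegEpi q := ⟨R, a, b, hq.1, hq.2⟩
  obtain ⟨T₁, s, x₁, hpb1, hs⟩ := stmt10_pb_regEpi hC x hqre
  obtain ⟨T₂, t, y₂, hpb2, ht⟩ := stmt10_pb_regEpi hC (s ≫ y) hqre
  have h1 : (t ≫ x₁) ≫ h = y₂ ≫ h := by
    simp only [← hm, Category.assoc]
    rw [← Category.assoc x₁ q m, ← hpb1.1, Category.assoc s x m, hxy,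
      ← Category.assoc s y m, ← Category.assoc t (s ≫ y) m, hpb2.1, Category.assoc]
  obtain ⟨w, ⟨hw1, hw2⟩, -⟩ := hkp.2 (t ≫ x₁) y₂ h1
  have h2 : (t ≫ x₁) ≫ q = y₂ ≫ q := by
    rw [← hw1, ← hw2, Category.assoc, Category.assoc, hq.1]
  have h3 : t ≫ s ≫ x = t ≫ s ≫ y := by
    rw [hpb1.1, ← Category.assoc, h2, ← hpb2.1]
  exact stmt10_regEpi_epi hs x y (stmt10_regEpi_epi ht (s ≫ x) (s ≫ y) h3)

/-- strong epi predicate: epi plus lifting against monos. -/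
def stmt10StrongE {X Y : C} (f : X ⟶ Y) : Prop :=
  (∀ ⦃Z : C⦄ (a b : Y ⟶ Z), f ≫ a = f ≫ b → a = b) ∧
  ∀ ⦃U V : C⦄ (m : U ⟶ V), stmt10MonoP m → ∀ (s : X ⟶ U) (t : Y ⟶ V), s ≫ m = f ≫ t →
    ∃ d : Y ⟶ U, f ≫ d = s ∧ d ≫ m = t

lemma stmt10_regEpi_strong {X Y : C} {f : X ⟶ Y} (hf : IsRegEpi f) : stmt10StrongE f :=
  ⟨fun _Z a b h => stmt10_regEpi_epi hf a b h,
   fun _U _V _m hm s t hc => stmt10_regEpi_lift hf hm s t hc⟩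

lemma stmt10_strong_regEpi (hC : IsRegularCat C) {X Y : C} {f : X ⟶ Y}
    (hf : stmt10StrongE f) : IsRegEpi f := by
  obtain ⟨R, a, b, hkp⟩ := stmt10_kp_exists hC.hasFiniteLimits f
  obtain ⟨Q, q, hq⟩ := hC.coeqOfKernelPairs f a b hkp
  obtain ⟨m, hm, -⟩ := hq.2 f hkp.1
  have hmono : stmt10MonoP m := stmt10_factor_mono hC hkp hq hm
  obtain ⟨d, hd1, _hd2⟩ := hf.2 m hmono q (𝟙 Y) (by rw [hm, Category.comp_id])
  refine ⟨R, a, b, hkp.1, fun Z g hg => ?_⟩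
  obtain ⟨t, ht, -⟩ := hq.2 g hg
  exact ⟨d ≫ t, by show f ≫ d ≫ t = g; rw [← Category.assoc, hd1, ht],
    fun y hy => hf.1 y (d ≫ t) (by rw [hy, ← Category.assoc, hd1, ht])⟩

lemma stmt10_strong_comp {X Y Z : C} {f : X ⟶ Y} {g : Y ⟶ Z} (hf : stmt10StrongE f)
    (hg : stmt10StrongE g) : stmt10StrongE (f ≫ g) := by
  constructor
  · intro W a b h
    exact hg.1 a b (hf.1 (g ≫ a) (g ≫ b)
      (by rw [← Category.assoc, ← Category.assoc]; exact h))
  · intro U V m hm s t hc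
    obtain ⟨d₁, hd₁, hd₁'⟩ := hf.2 m hm s (g ≫ t) (by rw [hc, Category.assoc])
    obtain ⟨d₂, hd₂, hd₂'⟩ := hg.2 m hm d₁ t hd₁'
    exact ⟨d₂, by rw [Category.assoc, hd₂, hd₁], hd₂'⟩

lemma stmt10_regEpi_comp (hC : IsRegularCat C) {X Y Z : C} {f : X ⟶ Y} {g : Y ⟶ Z}
    (hf : IsRegEpi f) (hg : IsRegEpi g) : IsRegEpi (f ≫ g) :=
  stmt10_strong_regEpi hC (stmt10_strong_comp (stmt10_regEpi_strong hf) (stmt10_regEpi_strong hg))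

lemma stmt10_image_fact (hC : IsRegularCat C) {X Z : C} (h : X ⟶ Z) :
    ∃ (Q : C) (q : X ⟶ Q) (m : Q ⟶ Z), IsRegEpi q ∧ stmt10MonoP m ∧ q ≫ m = h := by
  obtain ⟨R, a, b, hkp⟩ := stmt10_kp_exists hC.hasFiniteLimits h
  obtain ⟨Q, q, hq⟩ := hC.coeqOfKernelPairs h a b hkp
  obtain ⟨m, hm, -⟩ := hq.2 h hkp.1
  exact ⟨Q, q, m, ⟨R, a, b, hq.1, hq.2⟩, stmt10_factor_mono hC hkp hq hm, hm⟩

lemma stmt10_descent {M : MorClass C} (hM : IsMorIdeal M) (hK : HasNKernels M)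
    {A X Y : C} {e : A ⟶ X} (he : IsRegEpi e) {f : X ⟶ Y} (h : M (e ≫ f)) : M f := by
  obtain ⟨K, κ, hκ⟩ := hK (𝟙 Y)
  have hκM : M κ := by simpa using hκ.1
  have hmono : stmt10MonoP κ := by
    intro T x y hxy
    have hmem : M ((x ≫ κ) ≫ 𝟙 Y) := by simpa using hM.1 x κ hκM
    obtain ⟨u, -, huniq⟩ := hκ.2 (x ≫ κ) hmem
    exact (huniq x rfl).trans (huniq y hxy.symm).symm
  have hmem : M ((e ≫ f) ≫ 𝟙 Y) := by simpa using h
  obtain ⟨w, hw, -⟩ := hκ.2 (e ≫ f) hmem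
  obtain ⟨d, -, hd2⟩ := stmt10_regEpi_lift he hmono w f hw
  rw [← hd2]
  exact hM.1 d κ hκM

lemma stmt10_extClass_P_src {P : Set C} (hP : IsProjectiveCover P) {N : MorClass C}
    (hN : IsMorIdealOn P N) {A Y : C} (hA : A ∈ P) {h : A ⟶ Y} (hh : extClass P N h) :
    ∃ (B : C) (_ : B ∈ P) (n : A ⟶ B) (ε : B ⟶ Y), IsRegEpi ε ∧ N n ∧ h = n ≫ ε := by
  obtain ⟨A', B, _hA', hB, n, e, e', he, he', hn, hc⟩ := hh
  obtain ⟨s, hs⟩ := hP.proj hA e he (𝟙 A)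
  refine ⟨B, hB, s ≫ n, e', he', hN.2.1 s n hA hn, ?_⟩
  calc h = (s ≫ e) ≫ h := by rw [hs, Category.id_comp]
  _ = s ≫ e ≫ h := by rw [Category.assoc]
  _ = s ≫ n ≫ e' := by rw [hc]
  _ = (s ≫ n) ≫ e' := by rw [Category.assoc]
lemma stmt10_ext_ideal (hC : IsRegularCat C) {P : Set C} (hP : IsProjectiveCover P)
    {N : MorClass C} (hN : IsMorIdealOn P N) : IsMorIdeal (extClass P N) := by
  constructor
  · -- precomposition
    intro W X Y f g hg
    obtain ⟨A, B, hA, hB, n, e, e', he, he', hn, hc⟩ := hg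
    obtain ⟨Q, q₁, q₂, hpb, hq₁⟩ := stmt10_pb_regEpi hC f he
    obtain ⟨A₂, hA₂, c, hcre⟩ := hP.covers Q
    refine ⟨A₂, B, hA₂, hB, (c ≫ q₂) ≫ n, c ≫ q₁, e',
      stmt10_regEpi_comp hC hcre hq₁, he', hN.2.1 (c ≫ q₂) n hA₂ hn, ?_⟩
    have h1 : q₁ ≫ f ≫ g = q₂ ≫ n ≫ e' := by
      rw [← Category.assoc, hpb.1, Category.assoc, hc]
    simp only [Category.assoc]
    rw [h1]
  · -- postcomposition
    intro X Y Z f g hf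
    obtain ⟨A, B, hA, hB, n, e, e', he, he', hn, hc⟩ := hf
    obtain ⟨B₂, hB₂, c, hcre⟩ := hP.covers Z
    obtain ⟨b, hb⟩ := hP.proj hB c hcre (e' ≫ g)
    refine ⟨A, B₂, hA, hB₂, n ≫ b, e, c, he, hcre, hN.2.2 n b hB₂ hn, ?_⟩
    calc e ≫ f ≫ g = (e ≫ f) ≫ g := by rw [Category.assoc]
    _ = (n ≫ e') ≫ g := by rw [hc]
    _ = n ≫ e' ≫ g := by rw [Category.assoc]
    _ = n ≫ b ≫ c := by rw [hb]
    _ = (n ≫ b) ≫ c := by rw [Category.assoc]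

lemma stmt10_ext_hasKernels (hC : IsRegularCat C) {P : Set C} (hP : IsProjectiveCover P)
    {N : MorClass C} (hN : IsMorIdealOn P N) (hNK : HasWeakKernelsOn P N) :
    HasNKernels (extClass P N) := by
  intro X Y f
  obtain ⟨B, hB, ε, hε⟩ := hP.covers Y
  obtain ⟨Pi, π₁, π₂, hpb, hπ₁⟩ := stmt10_pb_regEpi hC f hε
  obtain ⟨A, hA, e₀, he₀⟩ := hP.covers Pi
  have heRE : IsRegEpi (e₀ ≫ π₁) := stmt10_regEpi_comp hC he₀ hπ₁
  have hn₀ : (e₀ ≫ π₁) ≫ f = (e₀ ≫ π₂) ≫ ε := by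
    rw [Category.assoc, Category.assoc, hpb.1]
  obtain ⟨K₀, k₀, hK₀, hk₀N, hk₀fac⟩ := hNK hA hB (e₀ ≫ π₂)
  obtain ⟨K, q, m, hqRE, hmono, hqm⟩ := stmt10_image_fact hC (k₀ ≫ (e₀ ≫ π₁))
  have main : ∀ ⦃T : C⦄, T ∈ P → ∀ (k' : T ⟶ X), extClass P N (k' ≫ f) →
      ∃ u : T ⟶ K, u ≫ m = k' := by
    intro T hT k' hk'
    obtain ⟨B₁, hB₁, n₁, ε₁, hε₁, hn₁, hfac⟩ := stmt10_extClass_P_src hP hN hT hk'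
    obtain ⟨b, hb⟩ := hP.proj hB₁ ε hε ε₁
    have hν : k' ≫ f = (n₁ ≫ b) ≫ ε := by rw [Category.assoc, hb, hfac]
    obtain ⟨w, ⟨hw1, hw2⟩, -⟩ := hpb.2 k' (n₁ ≫ b) hν
    obtain ⟨a, ha⟩ := hP.proj hT e₀ he₀ w
    have haN : N (a ≫ (e₀ ≫ π₂)) := by
      have h2 : a ≫ e₀ ≫ π₂ = n₁ ≫ b := by rw [← Category.assoc, ha, hw2]
      rw [h2]
      exact hN.2.2 n₁ b hB hn₁
    obtain ⟨x, hx⟩ := hk₀fac hT a haN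
    refine ⟨x ≫ q, ?_⟩
    calc (x ≫ q) ≫ m = x ≫ q ≫ m := by rw [Category.assoc]
    _ = x ≫ k₀ ≫ e₀ ≫ π₁ := by rw [hqm]
    _ = (x ≫ k₀) ≫ e₀ ≫ π₁ := by rw [Category.assoc]
    _ = a ≫ e₀ ≫ π₁ := by rw [hx]
    _ = (a ≫ e₀) ≫ π₁ := by rw [Category.assoc]
    _ = k' := by rw [ha, hw1]
  refine ⟨K, m, ?_, ?_⟩
  · refine ⟨K₀, B, hK₀, hB, k₀ ≫ (e₀ ≫ π₂), q, ε, hqRE, hε, hk₀N, ?_⟩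
    calc q ≫ m ≫ f = (q ≫ m) ≫ f := by rw [Category.assoc]
    _ = (k₀ ≫ e₀ ≫ π₁) ≫ f := by rw [hqm]
    _ = k₀ ≫ (e₀ ≫ π₁) ≫ f := by simp only [Category.assoc]
    _ = k₀ ≫ (e₀ ≫ π₂) ≫ ε := by rw [hn₀]
    _ = (k₀ ≫ e₀ ≫ π₂) ≫ ε := by simp only [Category.assoc]
  · intro K' k' hk'
    obtain ⟨A₁, B₁', hA₁, hB₁', n₁, e₁, e₁', he₁, he₁', hn₁, hc₁⟩ := hk'
    have hcomp : extClass P N ((e₁ ≫ k') ≫ f) :=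
      ⟨A₁, B₁', hA₁, hB₁', n₁, 𝟙 A₁, e₁', stmt10_regEpi_id _, he₁', hn₁, by
        rw [Category.id_comp, Category.assoc]; exact hc₁⟩
    obtain ⟨u₀, hu₀⟩ := main hA₁ (e₁ ≫ k') hcomp
    obtain ⟨d, _hd1, hd2⟩ := stmt10_regEpi_lift he₁ hmono u₀ k' hu₀
    exact ⟨d, hd2, fun y hy => hmono y d (by rw [hy, hd2])⟩

lemma stmt10_ext_sat {P : Set C} (hP : IsProjectiveCover P)
    {N : MorClass C} (hN : IsMorIdealOn P N) {P' Y : C} {f : P' ⟶ Y}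
    (hf : IsRegEpi f) : IsSaturating (extClass P N) f := by
  intro X n hn
  obtain ⟨A, B, hA, hB, ν, e, e', he, he', hν, hc⟩ := hn
  obtain ⟨β, hβ⟩ := hP.proj hB f hf e'
  obtain ⟨B₂, hB₂, c, hcre⟩ := hP.covers P'
  obtain ⟨b, hb⟩ := hP.proj hB c hcre β
  refine ⟨A, e, ν ≫ β, he, ?_, ?_⟩
  · refine ⟨A, B₂, hA, hB₂, ν ≫ b, 𝟙 A, c, stmt10_regEpi_id _, hcre,
      hN.2.2 ν b hB₂ hν, ?_⟩
    rw [Category.id_comp, Category.assoc, hb]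
  · rw [Category.assoc, hβ, ← hc]

lemma stmt10_rest_part {P : Set C} (hP : IsProjectiveCover P)
    {M : MorClass C} (hM : IsMorIdeal M) (hMK : HasNKernels M) :
    IsMorIdealOn P (restClass P M) ∧ HasWeakKernelsOn P (restClass P M) := by
  constructor
  · exact ⟨fun X Y f hf => ⟨hf.1, hf.2.1⟩,
      fun X Y Z f g hX hg => ⟨hX, hg.2.1, hM.1 f g hg.2.2⟩,
      fun X Y Z f g hZ hf => ⟨hf.1, hZ, hM.2 f g hf.2.2⟩⟩
  · intro X Y hX hY f
    obtain ⟨K, κ, hκ⟩ := hMK f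
    obtain ⟨Q, hQ, p, hpre⟩ := hP.covers K
    refine ⟨Q, p ≫ κ, hQ, ⟨hQ, hY, by rw [Category.assoc]; exact hM.1 p (κ ≫ f) hκ.1⟩, ?_⟩
    intro K' hK' k' hk'
    obtain ⟨u, hu, -⟩ := hκ.2 k' hk'.2.2
    obtain ⟨w, hw⟩ := hP.proj hK' p hpre u
    exact ⟨w, by rw [← Category.assoc, hw, hu]⟩

lemma stmt10_rest_ext {P : Set C} (hP : IsProjectiveCover P)
    {N : MorClass C} (hN : IsMorIdealOn P N) : restClass P (extClass P N) = N := by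
  funext X Y f
  apply propext
  constructor
  · rintro ⟨hX, hY, hf⟩
    obtain ⟨B, hB, n, ε, hε, hn, hfac⟩ := stmt10_extClass_P_src hP hN hX hf
    rw [hfac]
    exact hN.2.2 n ε hY hn
  · intro hf
    obtain ⟨hX, hY⟩ := hN.1 f hf
    exact ⟨hX, hY, X, Y, hX, hY, f, 𝟙 X, 𝟙 Y, stmt10_regEpi_id _, stmt10_regEpi_id _, hf,
      by rw [Category.id_comp, Category.comp_id]⟩

lemma stmt10_ext_rest (hC : IsRegularCat C) {P : Set C} (hP : IsProjectiveCover P)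
    {M : MorClass C} (hM : IsMorIdeal M) (hMK : HasNKernels M)
    (hsat : ∀ ⦃X Y : C⦄ (f : X ⟶ Y), IsRegEpi f → IsSaturating M f) :
    extClass P (restClass P M) = M := by
  funext X Y f
  apply propext
  constructor
  · rintro ⟨A, B, hA, hB, n, e, e', he, he', hn, hc⟩
    have hM' : M (e ≫ f) := by rw [hc]; exact hM.2 n e' hn.2.2
    exact stmt10_descent hM hMK he hM'
  · intro hf
    obtain ⟨B, hB, e', he'⟩ := hP.covers Y
    obtain ⟨Z, g, m, hg, hm, hmf⟩ := hsat e' he' f hf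
    obtain ⟨A, hA, c, hcre⟩ := hP.covers Z
    refine ⟨A, B, hA, hB, c ≫ m, c ≫ g, e', stmt10_regEpi_comp hC hcre hg, he',
      ⟨hA, hB, hM.1 c m hm⟩, ?_⟩
    rw [Category.assoc, Category.assoc, ← hmf]
/-- For a regular category C with projective cover P, the assignments
N ↦ N^C and M ↦ M_P give an order isomorphism between the poset of ideals of P admitting
weak kernels and the poset of ideals of C admitting kernels for which all regular
epimorphisms are saturating. -/
theorem statement10 (hC : IsRegularCat C) (P : Set C) (hP : IsProjectiveCover P) :
    (∀ N : MorClass C, IsMorIdealOn P N → HasWeakKernelsOn P N →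
        IsMorIdeal (extClass P N) ∧ HasNKernels (extClass P N) ∧
          (∀ ⦃X Y : C⦄ (f : X ⟶ Y), IsRegEpi f → IsSaturating (extClass P N) f)) ∧
    (∀ M : MorClass C, IsMorIdeal M → HasNKernels M →
        (∀ ⦃X Y : C⦄ (f : X ⟶ Y), IsRegEpi f → IsSaturating M f) →
        IsMorIdealOn P (restClass P M) ∧ HasWeakKernelsOn P (restClass P M)) ∧
    (∀ N : MorClass C, IsMorIdealOn P N → HasWeakKernelsOn P N →
        restClass P (extClass P N) = N) ∧
    (∀ M : MorClass C, IsMorIdeal M → HasNKernels M →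
        (∀ ⦃X Y : C⦄ (f : X ⟶ Y), IsRegEpi f → IsSaturating M f) →
        extClass P (restClass P M) = M) ∧
    (∀ N N' : MorClass C, MorClassLe N N' → MorClassLe (extClass P N) (extClass P N')) ∧
    (∀ M M' : MorClass C, MorClassLe M M' → MorClassLe (restClass P M) (restClass P M')) := by
  refine ⟨?_, ?_, ?_, ?_, ?_, ?_⟩
  · intro N hN hNK
    exact ⟨stmt10_ext_ideal hC hP hN, stmt10_ext_hasKernels hC hP hN hNK,
      fun X Y f hf => stmt10_ext_sat hP hN hf⟩
  · intro M hM hMK _hsat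
    exact stmt10_rest_part hP hM hMK
  · intro N hN _hNK
    exact stmt10_rest_ext hP hN
  · intro M hM hMK hsat
    exact stmt10_ext_rest hC hP hM hMK hsat
  · intro N N' hle X Y f hf
    obtain ⟨A, B, hA, hB, n, e, e', he, he', hn, hc⟩ := hf
    exact ⟨A, B, hA, hB, n, e, e', he, he', hle n hn, hc⟩
  · intro M M' hle X Y f hf
    exact ⟨hf.1, hf.2.1, hle f hf.2.2⟩
end

section
/- Let (C, N) be a regular multi-pointed category with N-kernels, having kernel pairs and coequalizers of kernel pairs. Then every regular epimorphism in C is a coequalizer of its kernel star if and only if every internal reflexive graph in C satisfies (∗π₀). In particular, a regular multi-pointed category with kernels is star-regular if and only if every internal reflexive graph satisfies (∗π₀). -/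
open CategoryTheory CategoryTheory.Limits

universe v u

variable {C : Type u} [Category.{v} C]

/-- Let (C, N) be a regular multi-pointed category with N-kernels, having
kernel pairs and coequalizers of kernel pairs. Then every regular epimorphism is a
coequalizer of its kernel star iff every internal reflexive graph satisfies (∗π₀). -/
theorem statement11 (hC : IsRegularCat C) (N : MorClass C) (hN : IsMorIdeal N)
    (hk : HasNKernels N) (hkp : HasKernelPairs C)
    (hcoeq : ∀ ⦃P X Y : C⦄ (f : X ⟶ Y) (u v : P ⟶ X), IsKernelPairOf f u v →
      ∃ (Q : C) (q : X ⟶ Q), IsCoequalizerOf u v q) :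
    RegEpisCoeqOfKernelStar N ↔ ReflGraphsStarPi0 N := by
  constructor
  · -- star-regularity ⟹ reflexive graphs satisfy (∗π₀)
    intro hstar G₁ G₀ d c e hed hec K k hkw Z g
    constructor
    · intro hkg
      -- kernel pair of d
      obtain ⟨D, d₁, d₂, hD⟩ := hkp d
      obtain ⟨Q, q, hq⟩ := hcoeq d d₁ d₂ hD
      have hqre : IsRegEpi q := ⟨D, d₁, d₂, hq⟩
      -- d factors through q
      obtain ⟨m, hm, -⟩ := hq.2 d hD.1
      -- (d₁, d₂) is also the kernel pair of q
      have hDq : IsKernelPairOf q d₁ d₂ := by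
        refine ⟨hq.1, ?_⟩
        intro W u' v' huv
        refine hD.2 u' v' ?_
        rw [← hm, ← Category.assoc, ← Category.assoc, huv]
      -- N-kernel of d₁
      obtain ⟨Kd, κ, hκ⟩ := hk d₁
      have hco := hstar q hqre d₁ d₂ hDq κ hκ
      -- factor κ ≫ d₁ and κ ≫ d₂ through the weak kernel k of d
      have hN1 : N ((κ ≫ d₁) ≫ d) := hN.2 (κ ≫ d₁) d hκ.1
      obtain ⟨u₁, hu₁⟩ := hkw.2 (κ ≫ d₁) hN1
      have hN2 : N ((κ ≫ d₂) ≫ d) := by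
        have : (κ ≫ d₂) ≫ d = (κ ≫ d₁) ≫ d := by
          rw [Category.assoc, Category.assoc, hD.1]
        rw [this]; exact hN1
      obtain ⟨u₂, hu₂⟩ := hkw.2 (κ ≫ d₂) hN2
      -- the key equality for the kernel star
      have key : (κ ≫ d₁) ≫ c ≫ g = (κ ≫ d₂) ≫ c ≫ g := by
        have e1 : (κ ≫ d₁) ≫ c ≫ g = (κ ≫ d₁) ≫ d ≫ g := by
          rw [← hu₁, Category.assoc, Category.assoc, ← hkg]
        have e2 : (κ ≫ d₂) ≫ c ≫ g = (κ ≫ d₂) ≫ d ≫ g := by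
          rw [← hu₂, Category.assoc, Category.assoc, ← hkg]
        have e3 : (κ ≫ d₁) ≫ d ≫ g = (κ ≫ d₂) ≫ d ≫ g := by
          rw [Category.assoc, Category.assoc, ← Category.assoc d₁ d g,
            ← Category.assoc d₂ d g, hD.1]
        rw [e1, e2, e3]
      obtain ⟨t, ht, -⟩ := hco.2 (c ≫ g) key
      have hcg : d₁ ≫ c ≫ g = d₂ ≫ c ≫ g := by
        rw [← ht, ← Category.assoc, ← Category.assoc, hq.1]
      -- the reflexivity section into the kernel pair of d
      obtain ⟨σ, ⟨hσ1, hσ2⟩, -⟩ := hD.2 (𝟙 G₁) (d ≫ e) (by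
        rw [Category.id_comp, Category.assoc, hed, Category.comp_id])
      calc d ≫ g = d ≫ (e ≫ c) ≫ g := by rw [hec, Category.id_comp]
        _ = (d ≫ e) ≫ c ≫ g := by simp only [Category.assoc]
        _ = (σ ≫ d₂) ≫ c ≫ g := by rw [hσ2]
        _ = σ ≫ d₂ ≫ c ≫ g := by rw [Category.assoc]
        _ = σ ≫ d₁ ≫ c ≫ g := by rw [hcg]
        _ = (σ ≫ d₁) ≫ c ≫ g := by rw [Category.assoc]
        _ = c ≫ g := by rw [hσ1, Category.id_comp]
    · intro hdg
      rw [hdg]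
  · -- reflexive graphs satisfy (∗π₀) ⟹ star-regularity
    intro hrg X Y f hf P u v hkpf K k hκ
    obtain ⟨δ, ⟨hδ1, hδ2⟩, -⟩ := hkpf.2 (𝟙 X) (𝟙 X) rfl
    have hsp : StarPi0 N u v := hrg u v δ hδ1 hδ2
    have hkw : IsWeakKernel N u k := ⟨hκ.1, fun K' k' hn => (hκ.2 k' hn).exists⟩
    constructor
    · rw [Category.assoc, Category.assoc, hkpf.1]
    · intro Z g hg
      have huv : u ≫ g = v ≫ g := by
        refine (hsp k hkw g).1 ?_
        rw [← Category.assoc, ← Category.assoc]; exact hg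
      obtain ⟨A, a, b, hab⟩ := hf
      obtain ⟨w, ⟨hw1, hw2⟩, -⟩ := hkpf.2 a b hab.1
      refine hab.2 g ?_
      rw [← hw1, ← hw2, Category.assoc, Category.assoc, huv]
end

section
/- Let (C, N) be a regular multi-pointed category with N-kernels, and let P be a projective cover of C. If (C, N) is star-regular, then every internal reflexive graph in P satisfies (∗π₀) with respect to the restricted ideal N_P. -/
open CategoryTheory CategoryTheory.Limits

universe v u

variable {C : Type u} [Category.{v} C]

/-- Let (C, N) be a regular multi-pointed category with N-kernels and
projective cover P. If (C, N) is star-regular, then every internal reflexive graph in P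
satisfies (∗π₀) with respect to the restricted ideal N_P. -/
theorem statement12 (hC : IsRegularCat C) (N : MorClass C) (hN : IsMorIdeal N)
    (hk : HasNKernels N) (P : Set C) (hP : IsProjectiveCover P)
    (hsr : RegEpisCoeqOfKernelStar N) :
    ReflGraphsStarPi0On P (restClass P N) := by
  intro G₁ G₀ hG₁ hG₀ d c e hed hec
  intro K k hkw Z hZ g
  constructor
  · intro hkg
    -- d is a regular epi (split epi)
    have hd : IsRegEpi d := by
      refine ⟨G₁, d ≫ e, 𝟙 G₁, ?_, ?_⟩
      · rw [Category.assoc, hed, Category.id_comp, Category.comp_id]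
      · intro W f hf
        rw [Category.id_comp] at hf
        refine ⟨e ≫ f, ?_, ?_⟩
        · show d ≫ e ≫ f = f
          rw [← Category.assoc, hf]
        · intro h' hh'
          rw [← Category.id_comp h', ← hed, Category.assoc, hh']
    -- kernel pair of d
    haveI := hC.hasFiniteLimits
    let u : pullback d d ⟶ G₁ := pullback.fst d d
    let v : pullback d d ⟶ G₁ := pullback.snd d d
    have huv : u ≫ d = v ≫ d := pullback.condition
    have hkp : IsKernelPairOf d u v := by
      refine ⟨huv, ?_⟩
      intro Q u' v' h
      refine ⟨pullback.lift u' v' h, ⟨pullback.lift_fst _ _ _, pullback.lift_snd _ _ _⟩, ?_⟩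
      intro w' ⟨hw1, hw2⟩
      apply pullback.hom_ext
      · exact hw1.trans (pullback.lift_fst _ _ _).symm
      · exact hw2.trans (pullback.lift_snd _ _ _).symm
    obtain ⟨K', k', hk'⟩ := hk d
    obtain ⟨K₀, k₀, hk₀⟩ := hk u
    have hcoeq : IsCoequalizerOf (k₀ ≫ u) (k₀ ≫ v) d := hsr d hd u v hkp k₀ hk₀
    -- transfer hypothesis from k to k' via a projective cover of K'
    obtain ⟨Q, hQ, p, hp⟩ := hP.covers K'
    have hNpk' : (restClass P N) ((p ≫ k') ≫ d) :=
      ⟨hQ, hG₀, by rw [Category.assoc]; exact hN.1 p (k' ≫ d) hk'.1⟩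
    obtain ⟨w, hw⟩ := hkw.2.2 hQ (p ≫ k') hNpk'
    have hw' : ∀ {W : C} (m : G₁ ⟶ W), w ≫ k ≫ m = p ≫ k' ≫ m := fun m => by
      rw [← Category.assoc, hw, Category.assoc]
    -- p is an epimorphism
    have hpe : ∀ {W : C} (a b : K' ⟶ W), p ≫ a = p ≫ b → a = b := by
      intro W a b hab
      obtain ⟨R, x, y, hco⟩ := hp
      have h1 : x ≫ p ≫ a = y ≫ p ≫ a := by
        rw [← Category.assoc, ← Category.assoc, hco.1]
      obtain ⟨t, ht, htu⟩ := hco.2 (p ≫ a) h1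
      rw [htu a rfl, htu b hab.symm]
    have hk'g : k' ≫ d ≫ g = k' ≫ c ≫ g := by
      apply hpe
      rw [← hw' (d ≫ g), ← hw' (c ≫ g), hkg]
    -- factor k₀ ≫ u and k₀ ≫ v through k'
    have hNu : N ((k₀ ≫ u) ≫ d) := hN.2 (k₀ ≫ u) d hk₀.1
    obtain ⟨a, ha, -⟩ := hk'.2 (k₀ ≫ u) hNu
    have ha' : ∀ {W : C} (m : G₁ ⟶ W), a ≫ k' ≫ m = k₀ ≫ u ≫ m := fun m => by
      rw [← Category.assoc, ha, Category.assoc]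
    have hNv : N ((k₀ ≫ v) ≫ d) := by
      have h2 : (k₀ ≫ v) ≫ d = (k₀ ≫ u) ≫ d := by
        rw [Category.assoc, Category.assoc, ← huv]
      rw [h2]; exact hNu
    obtain ⟨b, hb, -⟩ := hk'.2 (k₀ ≫ v) hNv
    have hb' : ∀ {W : C} (m : G₁ ⟶ W), b ≫ k' ≫ m = k₀ ≫ v ≫ m := fun m => by
      rw [← Category.assoc, hb, Category.assoc]
    have huv' : ∀ {W : C} (m : G₀ ⟶ W), u ≫ d ≫ m = v ≫ d ≫ m := fun m => by
      rw [← Category.assoc, huv, Category.assoc]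
    -- key equation
    have key : (k₀ ≫ u) ≫ c ≫ g = (k₀ ≫ v) ≫ c ≫ g := by
      rw [Category.assoc, Category.assoc]
      calc k₀ ≫ u ≫ c ≫ g = a ≫ k' ≫ c ≫ g := (ha' (c ≫ g)).symm
        _ = a ≫ k' ≫ d ≫ g := by rw [hk'g]
        _ = k₀ ≫ u ≫ d ≫ g := ha' (d ≫ g)
        _ = k₀ ≫ v ≫ d ≫ g := by rw [huv' g]
        _ = b ≫ k' ≫ d ≫ g := (hb' (d ≫ g)).symm
        _ = b ≫ k' ≫ c ≫ g := by rw [hk'g]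
        _ = k₀ ≫ v ≫ c ≫ g := hb' (c ≫ g)
    obtain ⟨h, hh, -⟩ := hcoeq.2 (c ≫ g) key
    have hg : h = g := by
      have h3 := congrArg (fun t => e ≫ t) hh
      simpa only [← Category.assoc, hed, hec, Category.id_comp] using h3
    exact hg ▸ hh
  · intro h
    rw [h]
end
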